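/- arXiv:1901.04477 — 6 statements merged into one kernel-verified Lean document; each statement's English description precedes it below -/
import Mathlib

section
/- Let L > 0. Define ω₁ = min{|π + πj/L| : j ∈ ℤ, |π + πj/L| > 0} and inductively ω_{k+1} = min{|π + πj/L| : j ∈ ℤ, |π + πj/L| > ω_k}. Then for every k ≥ 1, the gap satisfies d* ≤ ω_{k+1} − ω_k ≤ π/L, where d* = (π/L) · min{|2L + m| : m ∈ ℤ, 2L + m ≠ 0}. -/
open Real

/-- The next threshold strictly above `t`: the smallest value `|π + πj/L|` exceeding `t`. -/
noncomputable def nextThreshold (L t : ℝ) : ℝ :=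
  sInf {x : ℝ | (∃ j : ℤ, x = |π + π * j / L|) ∧ t < x}

/-- The increasing enumeration of thresholds: `omegaThr L k` is `ω_k` (with `ω_0 = 0`). -/
noncomputable def omegaThr (L : ℝ) : ℕ → ℝ
  | 0 => 0
  | k + 1 => nextThreshold L (omegaThr L k)

/-- `d* = (π/L) · min{|2L + m| : m ∈ ℤ, 2L + m ≠ 0}`. -/
noncomputable def dStar (L : ℝ) : ℝ :=
  (π / L) * sInf {r : ℝ | ∃ m : ℤ, r = |2 * L + (m : ℝ)| ∧ 2 * L + (m : ℝ) ≠ 0}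

namespace Stmt0Aux

def Dset (L : ℝ) : Set ℝ := {r : ℝ | ∃ m : ℤ, r = |2 * L + (m : ℝ)| ∧ 2 * L + (m : ℝ) ≠ 0}

def Sset (L : ℝ) : Set ℝ := {x : ℝ | ∃ j : ℤ, x = |π + π * j / L|}

lemma dStar_eq (L : ℝ) : dStar L = (π / L) * sInf (Dset L) := rfl

lemma pi_div_L_pos {L : ℝ} (hL : 0 < L) : 0 < π / L := div_pos Real.pi_pos hL

lemma thr_eq {L : ℝ} (hL : 0 < L) (j : ℤ) :
    |π + π * j / L| = (π / L) * |L + j| := by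
  have h : π + π * j / L = (π / L) * (L + j) := by field_simp
  rw [h, abs_mul, abs_of_pos (pi_div_L_pos hL)]

lemma Dset_nonempty (L : ℝ) : (Dset L).Nonempty := by
  refine ⟨|2 * L + ((1 - ⌊2 * L⌋ : ℤ) : ℝ)|, ⟨1 - ⌊2 * L⌋, rfl, ?_⟩⟩
  have h1 := Int.fract_nonneg (2 * L)
  have h2 : 2 * L + ((1 - ⌊2 * L⌋ : ℤ) : ℝ) = Int.fract (2 * L) + 1 := by
    rw [Int.fract]; push_cast; ring
  rw [h2]
  positivity

lemma Dset_bddBelow (L : ℝ) : BddBelow (Dset L) :=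
  ⟨0, fun r hr => by obtain ⟨m, rfl, _⟩ := hr; exact abs_nonneg _⟩

noncomputable def d0 (L : ℝ) : ℝ :=
  if Int.fract (2 * L) = 0 then 1 else min (Int.fract (2 * L)) (1 - Int.fract (2 * L))

lemma d0_pos (L : ℝ) : 0 < d0 L := by
  unfold d0
  split_ifs with h
  · norm_num
  · have h1 := Int.fract_nonneg (2 * L)
    have h2 := Int.fract_lt_one (2 * L)
    have h3 : 0 < Int.fract (2 * L) := lt_of_le_of_ne h1 (Ne.symm h)
    exact lt_min h3 (by linarith)

lemma d0_le (L : ℝ) {r : ℝ} (hr : r ∈ Dset L) : d0 L ≤ r := by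
  obtain ⟨m, rfl, hm⟩ := hr
  have key : 2 * L + (m : ℝ) = Int.fract (2 * L) + ((⌊2 * L⌋ + m : ℤ) : ℝ) := by
    rw [Int.fract]; push_cast; ring
  have h1 : 0 ≤ Int.fract (2 * L) := Int.fract_nonneg _
  have h2 : Int.fract (2 * L) < 1 := Int.fract_lt_one _
  unfold d0
  split_ifs with h0
  · rw [key, h0, zero_add] at hm ⊢
    have hz : (⌊2 * L⌋ + m : ℤ) ≠ 0 := by exact_mod_cast hm
    have : (1 : ℤ) ≤ |⌊2 * L⌋ + m| := Int.one_le_abs hz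
    calc (1:ℝ) ≤ |((⌊2 * L⌋ + m : ℤ) : ℝ)| := by rw [← Int.cast_abs]; exact_mod_cast this
      _ = _ := by rfl
  · have h3 : 0 < Int.fract (2 * L) := lt_of_le_of_ne h1 (Ne.symm h0)
    rcases le_or_gt 0 ((⌊2 * L⌋ + m : ℤ) : ℝ) with hq | hq
    · have habs : |2 * L + (m : ℝ)| = Int.fract (2 * L) + ((⌊2 * L⌋ + m : ℤ) : ℝ) := by
        rw [key, abs_of_nonneg (by linarith)]
      rw [habs]
      have := min_le_left (Int.fract (2 * L)) (1 - Int.fract (2 * L))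
      linarith
    · have hq1 : ((⌊2 * L⌋ + m : ℤ) : ℝ) ≤ -1 := by
        have h5 : (⌊2 * L⌋ + m : ℤ) < 0 := by exact_mod_cast hq
        have h6 : (⌊2 * L⌋ + m : ℤ) ≤ -1 := by omega
        exact_mod_cast h6
      have habs : |2 * L + (m : ℝ)| = -(Int.fract (2 * L) + ((⌊2 * L⌋ + m : ℤ) : ℝ)) := by
        rw [key, abs_of_neg (by linarith)]
      rw [habs]
      have := min_le_right (Int.fract (2 * L)) (1 - Int.fract (2 * L))
      linarith

lemma sInfD_pos (L : ℝ) : 0 < sInf (Dset L) :=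
  lt_of_lt_of_le (d0_pos L) (le_csInf (Dset_nonempty L) fun _ hr => d0_le L hr)

lemma sInfD_le_abs (L : ℝ) {m : ℤ} (hm : 2 * L + (m : ℝ) ≠ 0) :
    sInf (Dset L) ≤ |2 * L + (m : ℝ)| :=
  csInf_le (Dset_bddBelow L) ⟨m, rfl, hm⟩

lemma sInfD_le_one (L : ℝ) : sInf (Dset L) ≤ 1 := by
  by_cases h : Int.fract (2 * L) = 0
  · have h2 : 2 * L + ((1 - ⌊2 * L⌋ : ℤ) : ℝ) = 1 := by
      have hf : 2 * L - ⌊2 * L⌋ = 0 := by rw [Int.fract] at h; exact h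
      push_cast; linarith
    have := sInfD_le_abs L (m := 1 - ⌊2 * L⌋) (by rw [h2]; norm_num)
    rwa [h2, abs_one] at this
  · have h1 : 0 ≤ Int.fract (2 * L) := Int.fract_nonneg _
    have h2 : Int.fract (2 * L) < 1 := Int.fract_lt_one _
    have hk : 2 * L + ((-⌊2 * L⌋ : ℤ) : ℝ) = Int.fract (2 * L) := by
      rw [Int.fract]; push_cast; ring
    have := sInfD_le_abs L (m := -⌊2 * L⌋) (by rw [hk]; exact h)
    rw [hk, abs_of_nonneg h1] at this
    linarith

lemma dStar_pos {L : ℝ} (hL : 0 < L) : 0 < dStar L := by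
  rw [dStar_eq]
  exact mul_pos (pi_div_L_pos hL) (sInfD_pos L)

lemma dStar_le {L : ℝ} (hL : 0 < L) : dStar L ≤ π / L := by
  rw [dStar_eq]
  nlinarith [sInfD_le_one L, pi_div_L_pos hL, sInfD_pos L]

lemma gap_lower {L : ℝ} (hL : 0 < L) {s t : ℝ} (hs : s ∈ Sset L) (ht : t ∈ Sset L)
    (hne : s ≠ t) : dStar L ≤ |s - t| := by
  obtain ⟨i, rfl⟩ := hs
  obtain ⟨j, rfl⟩ := ht
  rw [thr_eq hL i, thr_eq hL j] at hne ⊢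
  have hc := pi_div_L_pos hL
  have hne' : |L + (i : ℝ)| ≠ |L + (j : ℝ)| := by
    intro h; exact hne (by rw [h])
  have hrhs : abs ((π / L) * |L + (i : ℝ)| - (π / L) * |L + (j : ℝ)|)
      = (π / L) * abs (|L + (i : ℝ)| - |L + (j : ℝ)|) := by
    rw [← mul_sub, abs_mul, abs_of_pos hc]
  rw [hrhs, dStar_eq]
  refine mul_le_mul_of_nonneg_left ?_ hc.le
  have hone := sInfD_le_one L
  rcases abs_cases (L + (i : ℝ)) with ⟨hi, _⟩ | ⟨hi, _⟩ <;>
    rcases abs_cases (L + (j : ℝ)) with ⟨hj, _⟩ | ⟨hj, _⟩ <;>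
    rw [hi, hj] at hne' ⊢
  · have hz : ((i - j : ℤ) : ℝ) ≠ 0 := by
      push_cast; intro h; apply hne'; linarith
    have heq : L + (i : ℝ) - (L + (j : ℝ)) = ((i - j : ℤ) : ℝ) := by push_cast; ring
    rw [heq, ← Int.cast_abs]
    have : (1 : ℤ) ≤ |i - j| := Int.one_le_abs (by exact_mod_cast hz)
    calc sInf (Dset L) ≤ 1 := hone
      _ ≤ ((|i - j| : ℤ) : ℝ) := by exact_mod_cast this
  · have heq : L + (i : ℝ) - -(L + (j : ℝ)) = 2 * L + ((i + j : ℤ) : ℝ) := by push_cast; ring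
    rw [heq]
    refine sInfD_le_abs L ?_
    push_cast
    intro h; apply hne'; linarith
  · have heq : -(L + (i : ℝ)) - (L + (j : ℝ)) = -(2 * L + ((i + j : ℤ) : ℝ)) := by
      push_cast; ring
    rw [heq, abs_neg]
    refine sInfD_le_abs L ?_
    push_cast
    intro h; apply hne'; linarith
  · have hz : ((j - i : ℤ) : ℝ) ≠ 0 := by
      push_cast; intro h; apply hne'; linarith
    have heq : -(L + (i : ℝ)) - -(L + (j : ℝ)) = ((j - i : ℤ) : ℝ) := by push_cast; ring
    rw [heq, ← Int.cast_abs]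
    have : (1 : ℤ) ≤ |j - i| := Int.one_le_abs (by exact_mod_cast hz)
    calc sInf (Dset L) ≤ 1 := hone
      _ ≤ ((|j - i| : ℤ) : ℝ) := by exact_mod_cast this

lemma exists_gt {L : ℝ} (hL : 0 < L) (t : ℝ) : ∃ x ∈ Sset L, t < x := by
  obtain ⟨n, hn⟩ := exists_nat_gt (t * L / π)
  have hπ := Real.pi_pos
  refine ⟨(π / L) * |L + ((n : ℤ) : ℝ)|, ⟨(n : ℤ), (thr_eq hL (n : ℤ)).symm⟩, ?_⟩
  have h1 : |L + ((n : ℤ) : ℝ)| = L + (n : ℝ) := by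
    push_cast
    exact abs_of_pos (by positivity)
  rw [h1]
  have h2 : t * L < n * π := by
    rw [div_lt_iff₀ hπ] at hn; linarith
  rw [div_mul_eq_mul_div, lt_div_iff₀ hL]
  nlinarith [mul_pos hπ hL]

lemma nextThreshold_le {L : ℝ} {t x : ℝ} (hx : x ∈ Sset L) (htx : t < x) :
    nextThreshold L t ≤ x :=
  csInf_le ⟨t, fun _ hy => hy.2.le⟩ ⟨hx, htx⟩

lemma nextThreshold_mem {L : ℝ} (hL : 0 < L) (t : ℝ) :
    nextThreshold L t ∈ Sset L ∧ t < nextThreshold L t := by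
  set T := {x : ℝ | (∃ j : ℤ, x = |π + π * j / L|) ∧ t < x} with hT
  have hTsub : T ⊆ Sset L := fun x hx => hx.1
  have hTne : T.Nonempty := by
    obtain ⟨x, hxS, hxt⟩ := exists_gt hL t
    exact ⟨x, hxS, hxt⟩
  have hTbdd : BddBelow T := ⟨t, fun x hx => le_of_lt hx.2⟩
  have hmem : sInf T ∈ T := by
    have hδ : 0 < dStar L := dStar_pos hL
    obtain ⟨x, hxT, hx⟩ := Real.lt_sInf_add_pos hTne hδ
    have hax : sInf T ≤ x := csInf_le hTbdd hxT
    rcases eq_or_lt_of_le hax with heq | hlt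
    · rwa [heq]
    · exfalso
      obtain ⟨y, hyT, hy⟩ := exists_lt_of_csInf_lt hTne hlt
      have h1 : sInf T ≤ y := csInf_le hTbdd hyT
      have hney : x ≠ y := fun h => absurd hy (by rw [h]; exact lt_irrefl _)
      have hg := gap_lower hL (hTsub hxT) (hTsub hyT) hney
      rw [abs_of_pos (by linarith : (0:ℝ) < x - y)] at hg
      linarith
  exact ⟨hTsub hmem, hmem.2⟩

lemma shift_mem {L : ℝ} (hL : 0 < L) {s : ℝ} (hs : s ∈ Sset L) : s + π / L ∈ Sset L := by
  obtain ⟨j, rfl⟩ := hs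
  rw [thr_eq hL j]
  rcases le_or_gt 0 (L + (j : ℝ)) with h | h
  · refine ⟨j + 1, ?_⟩
    rw [thr_eq hL (j + 1)]
    push_cast
    rw [abs_of_nonneg h, abs_of_nonneg (by linarith : (0:ℝ) ≤ L + ((j:ℝ) + 1))]
    ring
  · refine ⟨j - 1, ?_⟩
    rw [thr_eq hL (j - 1)]
    push_cast
    rw [abs_of_neg h, abs_of_neg (by linarith : L + ((j:ℝ) - 1) < 0)]
    ring

end Stmt0Aux

open Stmt0Aux in
theorem stmt0 (L : ℝ) (hL : 0 < L) (k : ℕ) (hk : 1 ≤ k) :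
    dStar L ≤ omegaThr L (k + 1) - omegaThr L k ∧
      omegaThr L (k + 1) - omegaThr L k ≤ π / L := by
  have hS : ∀ n : ℕ, omegaThr L (n + 1) ∈ Sset L ∧ omegaThr L n < omegaThr L (n + 1) := by
    intro n
    have := nextThreshold_mem hL (omegaThr L n)
    simpa [omegaThr] using this
  obtain ⟨m, rfl⟩ := Nat.exists_eq_succ_of_ne_zero (by omega : k ≠ 0)
  have h1 : omegaThr L (m + 1) ∈ Sset L := (hS m).1
  have h2 : omegaThr L (m + 2) ∈ Sset L := (hS (m + 1)).1
  have h3 : omegaThr L (m + 1) < omegaThr L (m + 2) := (hS (m + 1)).2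
  constructor
  · have hg := gap_lower hL h2 h1 (ne_of_gt h3)
    rwa [abs_of_pos (by linarith)] at hg
  · have hmem : omegaThr L (m + 1) + π / L ∈ Sset L := shift_mem hL h1
    have hle : nextThreshold L (omegaThr L (m + 1)) ≤ omegaThr L (m + 1) + π / L :=
      nextThreshold_le hmem (by linarith [pi_div_L_pos hL])
    have : omegaThr L (m + 2) = nextThreshold L (omegaThr L (m + 1)) := rfl
    linarith [this ▸ hle]
end

section
/- Let λ ∈ ℂ, κ ∈ ℝ, ω ≠ 0 with λ² + κ² = ω², and suppose the function W(x,y) = e^{iλx}(e^{iκy}, −ω⁻¹(λ+iκ)e^{iκy}, −ie^{−iκy}, −iω⁻¹(λ+iκ)e^{−iκy}) satisfies the armchair boundary conditions u(x,0) − iu'(x,0) = 0, −iv(x,0) + v'(x,0) = 0, e^{−i2πL}u(x,L) − iu'(x,L) = 0, −ie^{−i2πL}v(x,L) + v'(x,L) = 0 for all x. Then κ = π + πj/L for some integer j. -/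
open Complex Real in
theorem stmt6 (L : ℝ) (hL : 0 < L) (ω : ℝ) (hω : ω ≠ 0) (lam : ℂ) (κ : ℝ)
    (hdisp : lam ^ 2 + (κ : ℂ) ^ 2 = (ω : ℂ) ^ 2)
    -- the components (u, v, u', v') of the plane wave W
    (u v u' v' : ℝ × ℝ → ℂ)
    (hu : u = fun p => exp (I * lam * p.1) * exp (I * κ * p.2))
    (hv : v = fun p =>
      exp (I * lam * p.1) * (-((ω : ℂ)⁻¹ * (lam + I * κ)) * exp (I * κ * p.2)))
    (hu' : u' = fun p => exp (I * lam * p.1) * (-I * exp (-(I * κ * p.2))))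
    (hv' : v' = fun p =>
      exp (I * lam * p.1) * (-(I * (ω : ℂ)⁻¹ * (lam + I * κ)) * exp (-(I * κ * p.2))))
    -- armchair boundary conditions
    (hbc0 : ∀ x : ℝ, u (x, 0) - I * u' (x, 0) = 0 ∧ -(I * v (x, 0)) + v' (x, 0) = 0)
    (hbcL : ∀ x : ℝ, exp (-(I * (2 * π * L))) * u (x, L) - I * u' (x, L) = 0 ∧
      -(I * exp (-(I * (2 * π * L))) * v (x, L)) + v' (x, L) = 0) :
    ∃ j : ℤ, κ = π + π * j / L := by
  obtain ⟨h1, -⟩ := hbcL 0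
  subst hu hu'
  simp only [Complex.ofReal_zero, mul_zero, Complex.exp_zero, one_mul] at h1
  have key : Complex.exp (-(I*(2*(π:ℝ)*L)) : ℂ) * Complex.exp (I*(κ:ℂ)*(L:ℝ)) =
      Complex.exp (-(I*(κ:ℂ)*(L:ℝ))) := by
    linear_combination h1 - Complex.exp (-(I*(κ:ℂ)*(L:ℝ))) * Complex.I_sq
  have h2 : Complex.exp (-(I*(2*(π:ℝ)*L)) + I*(κ:ℂ)*(L:ℝ) + I*(κ:ℂ)*(L:ℝ)) = 1 := by
    rw [Complex.exp_add, Complex.exp_add, key, ← Complex.exp_add]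
    simp
  obtain ⟨n, hn⟩ := Complex.exp_eq_one_iff.mp h2
  have hre : -(2*π*L) + κ*L + κ*L = n*(2*π) := by
    have h := congrArg Complex.im hn
    simpa using h
  refine ⟨n, ?_⟩
  field_simp
  nlinarith [hre, Real.pi_pos]
end

section
/- Let w = (u,v,u',v') and w̃ = (ũ,ṽ,ũ',ṽ') be two solutions of the Dirac system D w = ω w on the strip Π = (0,L)×ℝ satisfying the armchair boundary conditions. Define q_a(w,w̃) = −i∫₀ᴸ [ conj(ũ)(a,y)v(a,y) + conj(ṽ)(a,y)u(a,y) − conj(ũ')(a,y)v'(a,y) − conj(ṽ')(a,y)u'(a,y) ] dy. Then q_a(w,w̃) is independent of a ∈ ℝ. -/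
noncomputable def px (f : ℝ × ℝ → ℂ) (p : ℝ × ℝ) : ℂ := fderiv ℝ f p (1, 0)
noncomputable def py (f : ℝ × ℝ → ℂ) (p : ℝ × ℝ) : ℂ := fderiv ℝ f p (0, 1)

/-- The symplectic form `q_a(w, w̃)` evaluated at the cross-section `x = a`. -/
noncomputable def qform (L a : ℝ) (u v u' v' tu tv tu' tv' : ℝ × ℝ → ℂ) : ℂ :=
  -Complex.I * ∫ y in (0: ℝ)..L,
    ((starRingEnd ℂ) (tu (a, y)) * v (a, y) + (starRingEnd ℂ) (tv (a, y)) * u (a, y)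
      - (starRingEnd ℂ) (tu' (a, y)) * v' (a, y) - (starRingEnd ℂ) (tv' (a, y)) * u' (a, y))

section Aux

lemma cd_conj {f : ℝ × ℝ → ℂ} (hf : ContDiff ℝ 1 f) :
    ContDiff ℝ 1 (fun q => (starRingEnd ℂ) (f q)) :=
  Complex.conjCLE.contDiff.comp hf

lemma da_conj {p : ℝ × ℝ} {f : ℝ × ℝ → ℂ} (hf : DifferentiableAt ℝ f p) :
    DifferentiableAt ℝ (fun q => (starRingEnd ℂ) (f q)) p :=
  hf.star

lemma pd_conj {p : ℝ × ℝ} {f : ℝ × ℝ → ℂ} (hf : DifferentiableAt ℝ f p) (w : ℝ × ℝ) :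
    fderiv ℝ (fun q => (starRingEnd ℂ) (f q)) p w = (starRingEnd ℂ) (fderiv ℝ f p w) := by
  have h : fderiv ℝ (fun q => star (f q)) p = _ := hf.hasFDerivAt.star.fderiv
  rw [show (fun q => (starRingEnd ℂ) (f q)) = (fun q => star (f q)) from rfl, h]
  rfl

lemma pd_term {f g : ℝ × ℝ → ℂ} {p : ℝ × ℝ} (hf : DifferentiableAt ℝ f p)
    (hg : DifferentiableAt ℝ g p) (w : ℝ × ℝ) :
    fderiv ℝ (fun q => (starRingEnd ℂ) (f q) * g q) p w
      = (starRingEnd ℂ) (fderiv ℝ f p w) * g p + (starRingEnd ℂ) (f p) * fderiv ℝ g p w := by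
  rw [fderiv_fun_mul (da_conj hf) hg]
  simp [ContinuousLinearMap.add_apply, pd_conj hf, smul_eq_mul]
  ring

variable (u v u' v' tu tv tu' tv' : ℝ × ℝ → ℂ)

/-- The integrand of the symplectic form. -/
noncomputable def Fc : ℝ × ℝ → ℂ := fun p =>
  (starRingEnd ℂ) (tu p) * v p + (starRingEnd ℂ) (tv p) * u p
    - (starRingEnd ℂ) (tu' p) * v' p - (starRingEnd ℂ) (tv' p) * u' p

/-- The flux through horizontal boundaries. -/
noncomputable def Gc : ℝ × ℝ → ℂ := fun p =>
  (starRingEnd ℂ) (tu p) * v p - (starRingEnd ℂ) (tv p) * u p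
    + (starRingEnd ℂ) (tu' p) * v' p - (starRingEnd ℂ) (tv' p) * u' p

variable (hu : ContDiff ℝ 1 u) (hv : ContDiff ℝ 1 v) (hu' : ContDiff ℝ 1 u')
  (hv' : ContDiff ℝ 1 v') (htu : ContDiff ℝ 1 tu) (htv : ContDiff ℝ 1 tv)
  (htu' : ContDiff ℝ 1 tu') (htv' : ContDiff ℝ 1 tv')

include hu hv hu' hv' htu htv htu' htv'

lemma Fc_contDiff : ContDiff ℝ 1 (Fc u v u' v' tu tv tu' tv') :=
  ((((cd_conj htu).mul hv).add ((cd_conj htv).mul hu)).sub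
    ((cd_conj htu').mul hv')).sub ((cd_conj htv').mul hu')

lemma Gc_contDiff : ContDiff ℝ 1 (Gc u v u' v' tu tv tu' tv') :=
  ((((cd_conj htu).mul hv).sub ((cd_conj htv).mul hu)).add
    ((cd_conj htu').mul hv')).sub ((cd_conj htv').mul hu')

lemma fderiv_Fc (p w : ℝ × ℝ) :
    fderiv ℝ (Fc u v u' v' tu tv tu' tv') p w
      = (starRingEnd ℂ) (fderiv ℝ tu p w) * v p + (starRingEnd ℂ) (tu p) * fderiv ℝ v p w
        + ((starRingEnd ℂ) (fderiv ℝ tv p w) * u p + (starRingEnd ℂ) (tv p) * fderiv ℝ u p w)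
        - ((starRingEnd ℂ) (fderiv ℝ tu' p w) * v' p + (starRingEnd ℂ) (tu' p) * fderiv ℝ v' p w)
        - ((starRingEnd ℂ) (fderiv ℝ tv' p w) * u' p
            + (starRingEnd ℂ) (tv' p) * fderiv ℝ u' p w) := by
  have d1 : DifferentiableAt ℝ (fun q => (starRingEnd ℂ) (tu q) * v q) p :=
    (da_conj (htu.differentiable one_ne_zero p)).mul (hv.differentiable one_ne_zero p)
  have d2 : DifferentiableAt ℝ (fun q => (starRingEnd ℂ) (tv q) * u q) p :=
    (da_conj (htv.differentiable one_ne_zero p)).mul (hu.differentiable one_ne_zero p)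
  have d3 : DifferentiableAt ℝ (fun q => (starRingEnd ℂ) (tu' q) * v' q) p :=
    (da_conj (htu'.differentiable one_ne_zero p)).mul (hv'.differentiable one_ne_zero p)
  have d4 : DifferentiableAt ℝ (fun q => (starRingEnd ℂ) (tv' q) * u' q) p :=
    (da_conj (htv'.differentiable one_ne_zero p)).mul (hu'.differentiable one_ne_zero p)
  rw [show Fc u v u' v' tu tv tu' tv' =
      ((fun q => (starRingEnd ℂ) (tu q) * v q) + (fun q => (starRingEnd ℂ) (tv q) * u q)
        - (fun q => (starRingEnd ℂ) (tu' q) * v' q))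
        - (fun q => (starRingEnd ℂ) (tv' q) * u' q) from rfl,
    fderiv_sub ((d1.add d2).sub d3) d4, fderiv_sub (d1.add d2) d3, fderiv_add d1 d2]
  simp only [ContinuousLinearMap.sub_apply, ContinuousLinearMap.add_apply,
    pd_term (htu.differentiable one_ne_zero p) (hv.differentiable one_ne_zero p),
    pd_term (htv.differentiable one_ne_zero p) (hu.differentiable one_ne_zero p),
    pd_term (htu'.differentiable one_ne_zero p) (hv'.differentiable one_ne_zero p),
    pd_term (htv'.differentiable one_ne_zero p) (hu'.differentiable one_ne_zero p)]

lemma fderiv_Gc (p w : ℝ × ℝ) :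
    fderiv ℝ (Gc u v u' v' tu tv tu' tv') p w
      = (starRingEnd ℂ) (fderiv ℝ tu p w) * v p + (starRingEnd ℂ) (tu p) * fderiv ℝ v p w
        - ((starRingEnd ℂ) (fderiv ℝ tv p w) * u p + (starRingEnd ℂ) (tv p) * fderiv ℝ u p w)
        + ((starRingEnd ℂ) (fderiv ℝ tu' p w) * v' p + (starRingEnd ℂ) (tu' p) * fderiv ℝ v' p w)
        - ((starRingEnd ℂ) (fderiv ℝ tv' p w) * u' p
            + (starRingEnd ℂ) (tv' p) * fderiv ℝ u' p w) := by
  have d1 : DifferentiableAt ℝ (fun q => (starRingEnd ℂ) (tu q) * v q) p :=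
    (da_conj (htu.differentiable one_ne_zero p)).mul (hv.differentiable one_ne_zero p)
  have d2 : DifferentiableAt ℝ (fun q => (starRingEnd ℂ) (tv q) * u q) p :=
    (da_conj (htv.differentiable one_ne_zero p)).mul (hu.differentiable one_ne_zero p)
  have d3 : DifferentiableAt ℝ (fun q => (starRingEnd ℂ) (tu' q) * v' q) p :=
    (da_conj (htu'.differentiable one_ne_zero p)).mul (hv'.differentiable one_ne_zero p)
  have d4 : DifferentiableAt ℝ (fun q => (starRingEnd ℂ) (tv' q) * u' q) p :=
    (da_conj (htv'.differentiable one_ne_zero p)).mul (hu'.differentiable one_ne_zero p)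
  rw [show Gc u v u' v' tu tv tu' tv' =
      ((fun q => (starRingEnd ℂ) (tu q) * v q) - (fun q => (starRingEnd ℂ) (tv q) * u q)
        + (fun q => (starRingEnd ℂ) (tu' q) * v' q))
        - (fun q => (starRingEnd ℂ) (tv' q) * u' q) from rfl,
    fderiv_sub ((d1.sub d2).add d3) d4, fderiv_add (d1.sub d2) d3, fderiv_sub d1 d2]
  simp only [ContinuousLinearMap.sub_apply, ContinuousLinearMap.add_apply,
    pd_term (htu.differentiable one_ne_zero p) (hv.differentiable one_ne_zero p),
    pd_term (htv.differentiable one_ne_zero p) (hu.differentiable one_ne_zero p),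
    pd_term (htu'.differentiable one_ne_zero p) (hv'.differentiable one_ne_zero p),
    pd_term (htv'.differentiable one_ne_zero p) (hu'.differentiable one_ne_zero p)]

end Aux

open Complex Real in
theorem stmt8 (L : ℝ) (hL : 0 < L) (ω : ℝ)
    (u v u' v' tu tv tu' tv' : ℝ × ℝ → ℂ)
    (hreg : ContDiff ℝ 1 u ∧ ContDiff ℝ 1 v ∧ ContDiff ℝ 1 u' ∧ ContDiff ℝ 1 v' ∧
      ContDiff ℝ 1 tu ∧ ContDiff ℝ 1 tv ∧ ContDiff ℝ 1 tu' ∧ ContDiff ℝ 1 tv')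
    -- w = (u,v,u',v') solves the Dirac system D w = ω w
    (hw : ∀ p : ℝ × ℝ,
      I * px v p + py v p = ω * u p ∧
      I * px u p - py u p = ω * v p ∧
      -(I * px v' p) + py v' p = ω * u' p ∧
      -(I * px u' p) - py u' p = ω * v' p)
    -- w̃ = (tu,tv,tu',tv') solves the Dirac system D w̃ = ω w̃
    (htw : ∀ p : ℝ × ℝ,
      I * px tv p + py tv p = ω * tu p ∧
      I * px tu p - py tu p = ω * tv p ∧
      -(I * px tv' p) + py tv' p = ω * tu' p ∧
      -(I * px tu' p) - py tu' p = ω * tv' p)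
    -- armchair boundary conditions for w
    (hbc : ∀ x : ℝ,
      u (x, 0) - I * u' (x, 0) = 0 ∧ -(I * v (x, 0)) + v' (x, 0) = 0 ∧
      exp (-(I * (2 * π * L))) * u (x, L) - I * u' (x, L) = 0 ∧
      -(I * exp (-(I * (2 * π * L))) * v (x, L)) + v' (x, L) = 0)
    -- armchair boundary conditions for w̃
    (htbc : ∀ x : ℝ,
      tu (x, 0) - I * tu' (x, 0) = 0 ∧ -(I * tv (x, 0)) + tv' (x, 0) = 0 ∧
      exp (-(I * (2 * π * L))) * tu (x, L) - I * tu' (x, L) = 0 ∧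
      -(I * exp (-(I * (2 * π * L))) * tv (x, L)) + tv' (x, L) = 0) :
    ∀ a b : ℝ, qform L a u v u' v' tu tv tu' tv' = qform L b u v u' v' tu tv tu' tv' := by
  obtain ⟨hu, hv, hu', hv', htu, htv, htu', htv'⟩ := hreg
  set F := Fc u v u' v' tu tv tu' tv' with hFdef
  set G := Gc u v u' v' tu tv tu' tv' with hGdef
  have hFc : ContDiff ℝ 1 F := Fc_contDiff u v u' v' tu tv tu' tv' hu hv hu' hv' htu htv htu' htv'
  have hGc : ContDiff ℝ 1 G := Gc_contDiff u v u' v' tu tv tu' tv' hu hv hu' hv' htu htv htu' htv'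
  -- the key pointwise identity ∂ₓ F = I ∂_y G
  have key : ∀ p : ℝ × ℝ, px F p = I * py G p := by
    intro p
    obtain ⟨h1, h2, h3, h4⟩ := hw p
    obtain ⟨t1, t2, t3, t4⟩ := htw p
    have c1 := congrArg (starRingEnd ℂ) t1
    have c2 := congrArg (starRingEnd ℂ) t2
    have c3 := congrArg (starRingEnd ℂ) t3
    have c4 := congrArg (starRingEnd ℂ) t4
    simp only [map_add, map_sub, map_mul, map_neg, Complex.conj_I, Complex.conj_ofReal] at c1 c2 c3 c4
    simp only [px, py] at h1 h2 h3 h4 c1 c2 c3 c4 ⊢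
    rw [hFdef, hGdef,
      fderiv_Fc u v u' v' tu tv tu' tv' hu hv hu' hv' htu htv htu' htv' p (1, 0),
      fderiv_Gc u v u' v' tu tv tu' tv' hu hv hu' hv' htu htv htu' htv' p (0, 1)]
    linear_combination (-I * (starRingEnd ℂ) (tu p)) * h1 + (-I * (starRingEnd ℂ) (tv p)) * h2
      + (-I * (starRingEnd ℂ) (tu' p)) * h3 + (-I * (starRingEnd ℂ) (tv' p)) * h4
      + (I * u p) * c1 + (I * v p) * c2 + (I * u' p) * c3 + (I * v' p) * c4
      + ((starRingEnd ℂ) (fderiv ℝ tu p (1, 0)) * v p + (starRingEnd ℂ) (tu p) * fderiv ℝ v p (1, 0)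
        + (starRingEnd ℂ) (fderiv ℝ tv p (1, 0)) * u p + (starRingEnd ℂ) (tv p) * fderiv ℝ u p (1, 0)
        - (starRingEnd ℂ) (fderiv ℝ tu' p (1, 0)) * v' p - (starRingEnd ℂ) (tu' p) * fderiv ℝ v' p (1, 0)
        - (starRingEnd ℂ) (fderiv ℝ tv' p (1, 0)) * u' p - (starRingEnd ℂ) (tv' p) * fderiv ℝ u' p (1, 0)) * Complex.I_sq
  -- boundary vanishing
  have hG0 : ∀ x : ℝ, G (x, 0) = 0 := by
    intro x
    obtain ⟨e1, e2, -, -⟩ := hbc x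
    obtain ⟨f1, f2, -, -⟩ := htbc x
    have f1c := congrArg (starRingEnd ℂ) f1
    have f2c := congrArg (starRingEnd ℂ) f2
    simp only [map_add, map_sub, map_mul, map_neg, map_zero, Complex.conj_I] at f1c f2c
    rw [hGdef]
    show (starRingEnd ℂ) (tu (x, 0)) * v (x, 0) - (starRingEnd ℂ) (tv (x, 0)) * u (x, 0)
      + (starRingEnd ℂ) (tu' (x, 0)) * v' (x, 0) - (starRingEnd ℂ) (tv' (x, 0)) * u' (x, 0) = 0
    linear_combination (v (x, 0)) * f1c + (-(starRingEnd ℂ) (tv (x, 0))) * e1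
      + ((starRingEnd ℂ) (tu' (x, 0))) * e2 + (-(u' (x, 0))) * f2c
  have hGL : ∀ x : ℝ, G (x, L) = 0 := by
    intro x
    obtain ⟨-, -, e3, e4⟩ := hbc x
    obtain ⟨-, -, f3, f4⟩ := htbc x
    have f3c := congrArg (starRingEnd ℂ) f3
    have f4c := congrArg (starRingEnd ℂ) f4
    simp only [map_add, map_sub, map_mul, map_neg, map_zero, Complex.conj_I] at f3c f4c
    have hk : (starRingEnd ℂ) (exp (-(I * (2 * π * L)))) * exp (-(I * (2 * π * L))) = 1 := by
      rw [← Complex.exp_conj, ← Complex.exp_add]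
      simp only [map_neg, map_mul, Complex.conj_I, Complex.conj_ofReal, map_ofNat]
      ring_nf
      exact Complex.exp_zero
    rw [hGdef]
    show (starRingEnd ℂ) (tu (x, L)) * v (x, L) - (starRingEnd ℂ) (tv (x, L)) * u (x, L)
      + (starRingEnd ℂ) (tu' (x, L)) * v' (x, L) - (starRingEnd ℂ) (tv' (x, L)) * u' (x, L) = 0
    have hu'L : u' (x, L) = -I * exp (-(I * (2 * π * L))) * u (x, L) := by
      linear_combination I * e3 + u' (x, L) * Complex.I_sq
    have hv'L : v' (x, L) = I * exp (-(I * (2 * π * L))) * v (x, L) := by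
      linear_combination e4
    have htu'L : (starRingEnd ℂ) (tu' (x, L))
        = I * (starRingEnd ℂ) (exp (-(I * (2 * π * L)))) * (starRingEnd ℂ) (tu (x, L)) := by
      linear_combination (-I) * f3c + (starRingEnd ℂ) (tu' (x, L)) * Complex.I_sq
    have htv'L : (starRingEnd ℂ) (tv' (x, L))
        = -I * (starRingEnd ℂ) (exp (-(I * (2 * π * L)))) * (starRingEnd ℂ) (tv (x, L)) := by
      linear_combination f4c
    rw [hu'L, hv'L, htu'L, htv'L]
    linear_combination ((starRingEnd ℂ) (tv (x, L)) * u (x, L)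
      - (starRingEnd ℂ) (tu (x, L)) * v (x, L)) * hk
      + (((starRingEnd ℂ) (tu (x, L)) * v (x, L) - (starRingEnd ℂ) (tv (x, L)) * u (x, L))
          * (starRingEnd ℂ) (Complex.exp (-(I * (2 * ↑π * ↑L)))) * Complex.exp (-(I * (2 * ↑π * ↑L)))) * Complex.I_sq
  -- continuity facts
  have hFcont : Continuous F := hFc.continuous
  have hpxF : Continuous (px F) :=
    (hFc.continuous_fderiv one_ne_zero).clm_apply continuous_const
  have hpyG : Continuous (py G) :=
    (hGc.continuous_fderiv one_ne_zero).clm_apply continuous_const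
  -- FTC in y : the inner integral of py G vanishes
  have hinner : ∀ x : ℝ, (∫ y in (0:ℝ)..L, px F (x, y)) = 0 := by
    intro x
    have h1 : (∫ y in (0:ℝ)..L, px F (x, y)) = ∫ y in (0:ℝ)..L, I * py G (x, y) := by
      congr 1; funext y; exact key (x, y)
    rw [h1, intervalIntegral.integral_const_mul]
    have h2 : (∫ y in (0:ℝ)..L, py G (x, y)) = G (x, L) - G (x, 0) := by
      apply intervalIntegral.integral_eq_sub_of_hasDerivAt
      · intro t _
        exact ((hGc.differentiable one_ne_zero (x, t)).hasFDerivAt.comp_hasDerivAt t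
          ((hasDerivAt_const t x).prodMk (hasDerivAt_id t)))
      · exact (hpyG.comp (continuous_const.prodMk continuous_id)).intervalIntegrable 0 L
    rw [h2, hGL x, hG0 x]
    ring
  -- the map a ↦ ∫ F (a, y) dy has zero derivative everywhere
  have hderiv : ∀ x₀ : ℝ, HasDerivAt (fun x => ∫ y in (0:ℝ)..L, F (x, y)) 0 x₀ := by
    intro x₀
    -- bound on the derivative over a compact neighborhood
    obtain ⟨C, hC⟩ : ∃ C, ∀ p ∈ (Metric.closedBall x₀ 1 ×ˢ Set.uIcc (0:ℝ) L), ‖px F p‖ ≤ C :=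
      ((isCompact_closedBall x₀ 1).prod isCompact_uIcc).exists_bound_of_continuousOn
        hpxF.continuousOn
    have main := (intervalIntegral.hasDerivAt_integral_of_dominated_loc_of_deriv_le
      (F := fun x y => F (x, y)) (F' := fun x y => px F (x, y)) (x₀ := x₀)
      (a := (0:ℝ)) (b := L) (bound := fun _ => C) (s := Metric.ball x₀ 1) (μ := MeasureTheory.volume) (Metric.ball_mem_nhds x₀ one_pos)
      (Filter.Eventually.of_forall fun x =>
        (hFcont.comp (continuous_const.prodMk continuous_id)).aestronglyMeasurable)
      ((hFcont.comp (continuous_const.prodMk continuous_id)).intervalIntegrable 0 L)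
      (hpxF.comp (continuous_const.prodMk continuous_id)).aestronglyMeasurable
      (Filter.Eventually.of_forall fun t ht x hx => hC (x, t)
        ⟨Metric.ball_subset_closedBall hx, Set.uIoc_subset_uIcc ht⟩)
      (intervalIntegrable_const)
      (Filter.Eventually.of_forall fun t ht x hx =>
        (by have := ((hFc.differentiable one_ne_zero (x, t)).hasFDerivAt.comp_hasDerivAt x
          ((hasDerivAt_id x).prodMk (hasDerivAt_const x t))); exact this))).2
    rwa [hinner x₀] at main
  have hconst : ∀ a b : ℝ,
      (∫ y in (0:ℝ)..L, F (a, y)) = ∫ y in (0:ℝ)..L, F (b, y) := by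
    intro a b
    exact is_const_of_deriv_eq_zero (fun x => (hderiv x).differentiableAt)
      (fun x => (hderiv x).deriv) a b
  intro a b
  unfold qform
  rw [show (∫ y in (0:ℝ)..L,
      ((starRingEnd ℂ) (tu (a, y)) * v (a, y) + (starRingEnd ℂ) (tv (a, y)) * u (a, y)
      - (starRingEnd ℂ) (tu' (a, y)) * v' (a, y) - (starRingEnd ℂ) (tv' (a, y)) * u' (a, y)))
      = ∫ y in (0:ℝ)..L, F (a, y) from rfl,
    show (∫ y in (0:ℝ)..L,
      ((starRingEnd ℂ) (tu (b, y)) * v (b, y) + (starRingEnd ℂ) (tv (b, y)) * u (b, y)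
      - (starRingEnd ℂ) (tu' (b, y)) * v' (b, y) - (starRingEnd ℂ) (tv' (b, y)) * u' (b, y)))
      = ∫ y in (0:ℝ)..L, F (b, y) from rfl,
    hconst a b]
end

section
/- Let q: V × V → ℂ be a sesquilinear anti-Hermitian form on a complex vector space V, and suppose vectors V₁,…,V_N, W₁,…,W_N ∈ V satisfy q(W_j, W_k) = i·δ_{jk}, q(V_j, V_k) = −i·δ_{jk}, q(W_j, V_k) = 0. If S ∈ ℂ^{N×N} and the vector z_j = V_j + Σ_k S_{jk}W_k satisfies q applied pairwise equals zero, i.e., q(z_j, z_k) = 0 for all j,k, then S is unitary: S·S* = I. -/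
theorem stmt12 {V : Type*} [AddCommGroup V] [Module ℂ V] (N : ℕ)
    (q : V → V → ℂ)
    -- sesquilinearity: additive and linear in first argument,
    (hadd₁ : ∀ x y z : V, q (x + y) z = q x z + q y z)
    (hsmul₁ : ∀ (c : ℂ) (x y : V), q (c • x) y = c * q x y)
    -- conjugate-linear in the second argument,
    (hadd₂ : ∀ x y z : V, q x (y + z) = q x y + q x z)
    (hsmul₂ : ∀ (c : ℂ) (x y : V), q x (c • y) = (starRingEnd ℂ) c * q x y)
    -- anti-Hermitian
    (hanti : ∀ x y : V, q x y = -(starRingEnd ℂ) (q y x))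
    (W v : Fin N → V)
    (hWW : ∀ j k, q (W j) (W k) = if j = k then Complex.I else 0)
    (hVV : ∀ j k, q (v j) (v k) = if j = k then -Complex.I else 0)
    (hWV : ∀ j k, q (W j) (v k) = 0)
    (S : Matrix (Fin N) (Fin N) ℂ)
    (z : Fin N → V) (hz : ∀ j, z j = v j + ∑ k, S j k • W k)
    (hq0 : ∀ j k, q (z j) (z k) = 0) :
    S * S.conjTranspose = 1 := by
  have hzero₁ : ∀ y : V, q 0 y = 0 := by
    intro y
    have := hadd₁ 0 0 y
    simp at this
    linear_combination this
  have hzero₂ : ∀ x : V, q x 0 = 0 := by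
    intro x
    have := hadd₂ x 0 0
    simp at this
    linear_combination this
  have hsum₁ : ∀ (f : Fin N → V) (y : V), q (∑ i, f i) y = ∑ i, q (f i) y := by
    intro f y
    classical
    induction (Finset.univ : Finset (Fin N)) using Finset.induction with
    | empty => simpa using hzero₁ y
    | insert a s h ih => rw [Finset.sum_insert h, Finset.sum_insert h, hadd₁, ih]
  have hsum₂ : ∀ (x : V) (f : Fin N → V), q x (∑ i, f i) = ∑ i, q x (f i) := by
    intro x f
    classical
    induction (Finset.univ : Finset (Fin N)) using Finset.induction with
    | empty => simpa using hzero₂ x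
    | insert a s h ih => rw [Finset.sum_insert h, Finset.sum_insert h, hadd₂, ih]
  have hVW : ∀ j k, q (v j) (W k) = 0 := by
    intro j k
    rw [hanti, hWV]
    simp
  ext j k
  have key := hq0 j k
  rw [hz j, hz k, hadd₁, hadd₂, hadd₂, hsum₁, hsum₂, hsum₂] at key
  simp only [hsmul₁, hsmul₂, hVV, hVW, hWV, mul_zero, Finset.sum_const_zero, add_zero,
    zero_add] at key
  have hterm : ∀ m, q (∑ l, S j l • W l) (W m) = S j m * Complex.I := by
    intro m
    rw [hsum₁]
    simp only [hsmul₁, hWW]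
    rw [Finset.sum_eq_single m]
    · simp
    · intro b _ hb; simp [hb]
    · simp
  simp only [hterm] at key
  have hs : (∑ x, (starRingEnd ℂ) (S k x) * (S j x * Complex.I)) =
      (∑ m, S j m * starRingEnd ℂ (S k m)) * Complex.I := by
    rw [Finset.sum_mul]; apply Finset.sum_congr rfl; intro m _; ring
  rw [hs] at key
  have key3 : ∑ m, S j m * starRingEnd ℂ (S k m) = if j = k then 1 else 0 := by
    by_cases hjk : j = k
    · simp only [hjk, if_true] at key ⊢
      have h' : (∑ m, S k m * starRingEnd ℂ (S k m)) * Complex.I = 1 * Complex.I := by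
        rw [one_mul]; linear_combination key
      exact mul_right_cancel₀ Complex.I_ne_zero h'
    · simp only [hjk, if_false] at key ⊢
      rw [zero_add] at key
      rcases mul_eq_zero.mp key with h | h
      · exact h
      · exact absurd h Complex.I_ne_zero
  simp [Matrix.mul_apply, Matrix.conjTranspose_apply, key3, Matrix.one_apply]
end

section
/- Let S be a unitary 2N × 2N complex matrix written in block form S = [[S_••, S_•†],[S_†•, S_††]] with S_†† of size 2×2, and let d ∈ ℂ with |d| = 1. If a row vector a_† ∈ ℂ² satisfies a_†(S_†† + dΥ) = 0 where Υ = [[0,1],[1,0]], then a_† S_†• = 0. -/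
open Matrix in
theorem stmt13 (n : ℕ)
    (S : Matrix (Fin n ⊕ Fin 2) (Fin n ⊕ Fin 2) ℂ)
    (hS : S * S.conjTranspose = 1 ∧ S.conjTranspose * S = 1)
    (d : ℂ) (hd : ‖d‖ = 1)
    (a : Fin 2 → ℂ)
    (ha : Matrix.vecMul a (S.toBlocks₂₂ + d • !![0, 1; 1, 0]) = 0) :
    Matrix.vecMul a S.toBlocks₂₁ = 0 := by
  obtain ⟨hS1, hS2⟩ := hS
  set v : (Fin n ⊕ Fin 2) → ℂ := Sum.elim 0 a with hv
  -- unitarity: vector norms preserved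
  have key : (vecMul v S) ⬝ᵥ star (vecMul v S) = v ⬝ᵥ star v := by
    have hst : star (vecMul v S) = Sᴴ *ᵥ (star v) := by
      ext j
      simp [vecMul, mulVec, dotProduct, conjTranspose_apply, map_sum, mul_comm]
    rw [hst, dotProduct_mulVec, vecMul_vecMul, hS1, vecMul_one]
  have h1 : ∀ j, vecMul v S (Sum.inl j) = vecMul a S.toBlocks₂₁ j := by
    intro j
    simp [vecMul, dotProduct, Fintype.sum_sum_type, hv, toBlocks₂₁]
  have h2 : ∀ j, vecMul v S (Sum.inr j) = vecMul a S.toBlocks₂₂ j := by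
    intro j
    simp [vecMul, dotProduct, Fintype.sum_sum_type, hv, toBlocks₂₂]
  -- from ha :
  have ha' : vecMul a S.toBlocks₂₂ = -(d • vecMul a !![0, 1; 1, 0]) := by
    rw [vecMul_add] at ha
    have hsm : vecMul a (d • !![(0:ℂ), 1; 1, 0]) = d • vecMul a !![0, 1; 1, 0] := by
      ext j
      fin_cases j <;> simp [vecMul, dotProduct, Fin.sum_univ_two, Matrix.vecHead, Matrix.vecTail] <;> ring
    rw [hsm] at ha
    rw [eq_neg_iff_add_eq_zero]
    exact ha
  have hY : vecMul a !![(0:ℂ), 1; 1, 0] = ![a 1, a 0] := by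
    ext j
    fin_cases j <;> simp [vecMul, dotProduct, Fin.sum_univ_two]
  have hd2 : Complex.normSq d = 1 := by
    have := Complex.sq_norm d
    rw [hd] at this
    simpa using this.symm
  -- take real parts of key
  have keyR : ∑ j : Fin n, Complex.normSq (vecMul a S.toBlocks₂₁ j)
      + ∑ j : Fin 2, Complex.normSq (vecMul a S.toBlocks₂₂ j)
      = ∑ j : Fin 2, Complex.normSq (a j) := by
    have := congrArg Complex.re key
    simp only [dotProduct, Fintype.sum_sum_type, Pi.star_apply, Complex.mul_conj,
      Complex.re_sum] at this
    simp only [h1, h2] at this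
    simpa [hv, Complex.ofReal_sum, Complex.normSq_apply] using this
  have hsum2 : ∑ j : Fin 2, Complex.normSq (vecMul a S.toBlocks₂₂ j)
      = ∑ j : Fin 2, Complex.normSq (a j) := by
    rw [ha', hY]
    simp [Fin.sum_univ_two, Complex.normSq_mul, hd2]
    ring
  have hzero : ∑ j : Fin n, Complex.normSq (vecMul a S.toBlocks₂₁ j) = 0 := by
    have := keyR
    rw [hsum2] at this
    linarith
  ext j
  have hterm : Complex.normSq (vecMul a S.toBlocks₂₁ j) = 0 := by
    have hnn : ∀ i ∈ Finset.univ, 0 ≤ Complex.normSq (vecMul a S.toBlocks₂₁ i) :=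
      fun i _ => Complex.normSq_nonneg _
    exact (Finset.sum_eq_zero_iff_of_nonneg hnn).mp hzero j (Finset.mem_univ j)
  simpa using Complex.normSq_eq_zero.mp hterm
end

section
/- Let u, u' : Π → ℂ be C¹ functions on the strip Π = (0,L) × ℝ decaying at infinity, satisfying the boundary conditions u(x,0) − iu'(x,0) = 0 and e^{−i2πL}u(x,L) − iu'(x,L) = 0 for all x. Then ∫_Π (|(i∂_x − ∂_y)u|² + |(−i∂_x − ∂_y)u'|²) dxdy = ∫_Π (|∇u|² + |∇u'|²) dxdy. -/
open Complex MeasureTheory Set Filter Topology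

namespace S18
variable {f : ℝ × ℝ → ℂ}

lemma cont_px (hf : ContDiff ℝ 1 f) : Continuous (px f) :=
  (hf.continuous_fderiv one_ne_zero).clm_apply continuous_const

lemma cont_py (hf : ContDiff ℝ 1 f) : Continuous (py f) :=
  (hf.continuous_fderiv one_ne_zero).clm_apply continuous_const

lemma px_zero {p : ℝ × ℝ} (hp : p ∉ tsupport f) : px f p = 0 := by
  have : fderiv ℝ f p = 0 := by
    by_contra h
    exact hp (support_fderiv_subset ℝ (by simpa [Function.mem_support] using h))
  simp [px, this]

lemma py_zero {p : ℝ × ℝ} (hp : p ∉ tsupport f) : py f p = 0 := by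
  have : fderiv ℝ f p = 0 := by
    by_contra h
    exact hp (support_fderiv_subset ℝ (by simpa [Function.mem_support] using h))
  simp [py, this]

lemma sliceX (hf : ContDiff ℝ 1 f) (x y : ℝ) :
    HasDerivAt (fun t => f (t, y)) (px f (x, y)) x := by
  have hdf := (hf.differentiable one_ne_zero (x, y)).hasFDerivAt
  have h1 : HasDerivAt (fun t : ℝ => (t, y)) ((1:ℝ), (0:ℝ)) x := by
    simpa using ((hasDerivAt_id x).prodMk (hasDerivAt_const x y))
  exact hdf.comp_hasDerivAt x h1

lemma sliceY (hf : ContDiff ℝ 1 f) (x y : ℝ) :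
    HasDerivAt (fun t => f (x, t)) (py f (x, y)) y := by
  have hdf := (hf.differentiable one_ne_zero (x, y)).hasFDerivAt
  have h1 : HasDerivAt (fun t : ℝ => (x, t)) ((0:ℝ), (1:ℝ)) y := by
    simpa using ((hasDerivAt_const y x).prodMk (hasDerivAt_id y))
  exact hdf.comp_hasDerivAt y h1

lemma integrable_of_bounded_support {E : Type*} [NormedAddCommGroup E] {g : ℝ → E}
    (hg : Continuous g) {R : ℝ} (h : ∀ t, t ∉ Icc (-R) R → g t = 0) :
    Integrable g :=
  hg.integrable_of_hasCompactSupport (HasCompactSupport.intro isCompact_Icc h)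

lemma integral_deriv_zero {g : ℝ → ℂ} (hg : ContDiff ℝ 1 g) (hsg : HasCompactSupport g) :
    ∫ t, deriv g t = 0 := by
  have h1 := hsg.integral_Iic_deriv_eq hg 0
  have h2 := hsg.integral_Ioi_deriv_eq hg 0
  have hint : Integrable (deriv g) :=
    (hg.continuous_deriv le_rfl).integrable_of_hasCompactSupport hsg.deriv
  rw [← intervalIntegral.integral_Iic_add_Ioi hint.integrableOn hint.integrableOn, h1, h2]
  ring

lemma exists_R (hsf : HasCompactSupport f) : ∃ R : ℝ, ∀ p ∈ tsupport f, |p.1| ≤ R := by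
  obtain ⟨R, hR⟩ := hsf.isBounded.subset_closedBall 0
  exact ⟨R, fun p hp => le_trans (norm_fst_le p) (by simpa using hR hp)⟩

lemma not_mem_ts {R t : ℝ} (hR : ∀ p ∈ tsupport f, |p.1| ≤ R)
    (h : t ∉ Icc (-R) R) (s : ℝ) : (t, s) ∉ tsupport f :=
  fun hm => h (mem_Icc.mpr (abs_le.mp (hR _ hm)))

lemma parts (hf : ContDiff ℝ 1 f) (hsf : HasCompactSupport f) (y z : ℝ) :
    ∫ x : ℝ, ((starRingEnd ℂ) (f (x, y)) * px f (x, z)).im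
      = - ∫ x : ℝ, ((starRingEnd ℂ) (px f (x, y)) * f (x, z)).im := by
  obtain ⟨R, hR⟩ := exists_R hsf
  set A : ℝ → ℂ := fun t => (starRingEnd ℂ) (px f (t, y)) * f (t, z) with hA
  set B : ℝ → ℂ := fun t => (starRingEnd ℂ) (f (t, y)) * px f (t, z) with hB
  have contsl : ∀ s : ℝ, Continuous fun t : ℝ => f (t, s) := fun s =>
    hf.continuous.comp (continuous_id.prodMk continuous_const)
  have contpx : ∀ s : ℝ, Continuous fun t : ℝ => px f (t, s) := fun s =>
    (cont_px hf).comp (continuous_id.prodMk continuous_const)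
  have contA : Continuous A := (continuous_star.comp (contpx y)).mul (contsl z)
  have contB : Continuous B := (continuous_star.comp (contsl y)).mul (contpx z)
  have hAz : ∀ t, t ∉ Icc (-R) R → A t = 0 := by
    intro t ht
    simp [hA, image_eq_zero_of_notMem_tsupport (not_mem_ts hR ht z)]
  have hBz : ∀ t, t ∉ Icc (-R) R → B t = 0 := by
    intro t ht
    simp [hB, px_zero (not_mem_ts hR ht z)]
  have intA : Integrable A :=
    contA.integrable_of_hasCompactSupport (HasCompactSupport.intro isCompact_Icc hAz)
  have intB : Integrable B :=
    contB.integrable_of_hasCompactSupport (HasCompactSupport.intro isCompact_Icc hBz)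
  set φ : ℝ → ℂ := fun t => (starRingEnd ℂ) (f (t, y)) * f (t, z) with hφ
  have hφd : ∀ t, HasDerivAt φ (A t + B t) t := by
    intro t
    exact ((sliceX hf t y).star.mul (sliceX hf t z))
  have hφc : ContDiff ℝ 1 φ := by
    have h1 : ContDiff ℝ 1 (fun t : ℝ => f (t, y)) := hf.comp (contDiff_id.prodMk contDiff_const)
    have h2 : ContDiff ℝ 1 (fun t : ℝ => f (t, z)) := hf.comp (contDiff_id.prodMk contDiff_const)
    exact (Complex.conjCLE.contDiff.comp h1).mul h2
  have hφs : HasCompactSupport φ := by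
    apply HasCompactSupport.intro (isCompact_Icc (a := -R) (b := R))
    intro t ht
    simp [hφ, image_eq_zero_of_notMem_tsupport (not_mem_ts hR ht z)]
  have h0 : ∫ t, (A t + B t) = 0 := by
    rw [← integral_deriv_zero hφc hφs]
    exact integral_congr_ae (Eventually.of_forall fun t => ((hφd t).deriv).symm)
  have h0im : ∫ t, ((A t).im + (B t).im) = 0 := by
    have := integral_im (μ := (volume : Measure ℝ)) (intA.add intB)
    simp only [RCLike.im_to_complex, Complex.add_im, Pi.add_apply] at this
    rw [this, h0]
    simp
  have intAim : Integrable (fun t => (A t).im) :=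
    (Complex.continuous_im.comp contA).integrable_of_hasCompactSupport
      (HasCompactSupport.intro (isCompact_Icc (a := -R) (b := R)) (fun t ht => by simp [hAz t ht]))
  have intBim : Integrable (fun t => (B t).im) :=
    (Complex.continuous_im.comp contB).integrable_of_hasCompactSupport
      (HasCompactSupport.intro (isCompact_Icc (a := -R) (b := R)) (fun t ht => by simp [hBz t ht]))
  rw [integral_add intAim intBim] at h0im
  have : ∫ t, (B t).im = - ∫ t, (A t).im := by linarith
  simpa [hA, hB] using this

lemma integrable_im_mul {g h : ℝ → ℂ} (hg : Continuous g) (hh : Continuous h) {R : ℝ}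
    (h0 : ∀ t, t ∉ Icc (-R) R → h t = 0) :
    Integrable fun t => ((starRingEnd ℂ) (g t) * h t).im := by
  refine (Complex.continuous_im.comp ((continuous_star.comp hg).mul hh)).integrable_of_hasCompactSupport
    (HasCompactSupport.intro (isCompact_Icc (a := -R) (b := R)) fun t ht => by simp [h0 t ht])

lemma diff_W (hf : ContDiff ℝ 1 f) (hsf : HasCompactSupport f) (y z : ℝ) :
    (∫ x : ℝ, ((starRingEnd ℂ) (f (x, z)) * px f (x, z)).im)
      - ∫ x : ℝ, ((starRingEnd ℂ) (f (x, y)) * px f (x, y)).im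
    = ∫ x : ℝ, (((starRingEnd ℂ) (f (x, z) - f (x, y)) * px f (x, z)).im
        - ((starRingEnd ℂ) (px f (x, y)) * (f (x, z) - f (x, y))).im) := by
  obtain ⟨R, hR⟩ := exists_R hsf
  have contsl : ∀ s : ℝ, Continuous fun t : ℝ => f (t, s) := fun s =>
    hf.continuous.comp (continuous_id.prodMk continuous_const)
  have contpx : ∀ s : ℝ, Continuous fun t : ℝ => px f (t, s) := fun s =>
    (cont_px hf).comp (continuous_id.prodMk continuous_const)
  have hz1 : ∀ (t : ℝ), t ∉ Icc (-R) R → ∀ s, f (t, s) = 0 := fun t ht s =>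
    image_eq_zero_of_notMem_tsupport (not_mem_ts hR ht s)
  have hz2 : ∀ (t : ℝ), t ∉ Icc (-R) R → ∀ s, px f (t, s) = 0 := fun t ht s =>
    px_zero (not_mem_ts hR ht s)
  have i1 : Integrable fun x : ℝ => ((starRingEnd ℂ) (f (x, z)) * px f (x, z)).im :=
    integrable_im_mul (contsl z) (contpx z) (fun t ht => hz2 t ht z)
  have i2 : Integrable fun x : ℝ => ((starRingEnd ℂ) (f (x, y)) * px f (x, z)).im :=
    integrable_im_mul (contsl y) (contpx z) (fun t ht => hz2 t ht z)
  have i3 : Integrable fun x : ℝ => ((starRingEnd ℂ) (px f (x, y)) * f (x, z)).im :=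
    integrable_im_mul (contpx y) (contsl z) (fun t ht => hz1 t ht z)
  have i4 : Integrable fun x : ℝ => ((starRingEnd ℂ) (px f (x, y)) * f (x, y)).im :=
    integrable_im_mul (contpx y) (contsl y) (fun t ht => hz1 t ht y)
  have key : (fun x : ℝ => (((starRingEnd ℂ) (f (x, z) - f (x, y)) * px f (x, z)).im
        - ((starRingEnd ℂ) (px f (x, y)) * (f (x, z) - f (x, y))).im))
      = fun x : ℝ => (((starRingEnd ℂ) (f (x, z)) * px f (x, z)).im
          - ((starRingEnd ℂ) (f (x, y)) * px f (x, z)).im)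
        - (((starRingEnd ℂ) (px f (x, y)) * f (x, z)).im
          - ((starRingEnd ℂ) (px f (x, y)) * f (x, y)).im) := by
    funext x
    simp only [map_sub, sub_mul, mul_sub, Complex.sub_im]
  have E1 : (∫ x : ℝ, (((starRingEnd ℂ) (f (x, z)) * px f (x, z)).im
          - ((starRingEnd ℂ) (f (x, y)) * px f (x, z)).im))
      = (∫ x : ℝ, ((starRingEnd ℂ) (f (x, z)) * px f (x, z)).im)
        - ∫ x : ℝ, ((starRingEnd ℂ) (f (x, y)) * px f (x, z)).im := integral_sub i1 i2
  have E2 : (∫ x : ℝ, (((starRingEnd ℂ) (px f (x, y)) * f (x, z)).im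
          - ((starRingEnd ℂ) (px f (x, y)) * f (x, y)).im))
      = (∫ x : ℝ, ((starRingEnd ℂ) (px f (x, y)) * f (x, z)).im)
        - ∫ x : ℝ, ((starRingEnd ℂ) (px f (x, y)) * f (x, y)).im := integral_sub i3 i4
  have E3 : (∫ x : ℝ, ((((starRingEnd ℂ) (f (x, z)) * px f (x, z)).im
          - ((starRingEnd ℂ) (f (x, y)) * px f (x, z)).im)
        - (((starRingEnd ℂ) (px f (x, y)) * f (x, z)).im
          - ((starRingEnd ℂ) (px f (x, y)) * f (x, y)).im)))
      = (∫ x : ℝ, (((starRingEnd ℂ) (f (x, z)) * px f (x, z)).im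
          - ((starRingEnd ℂ) (f (x, y)) * px f (x, z)).im))
        - ∫ x : ℝ, (((starRingEnd ℂ) (px f (x, y)) * f (x, z)).im
          - ((starRingEnd ℂ) (px f (x, y)) * f (x, y)).im) := integral_sub (i1.sub i2) (i3.sub i4)
  rw [key, E3, E1, E2, parts hf hsf y z, parts hf hsf y y]
  ring

lemma exists_C (hf : ContDiff ℝ 1 f) (hsf : HasCompactSupport f) :
    ∃ C : ℝ, 0 ≤ C ∧ (∀ p, ‖px f p‖ ≤ C) ∧ (∀ p, ‖py f p‖ ≤ C) ∧
      (∀ x z s : ℝ, ‖f (x, z) - f (x, s)‖ ≤ C * ‖z - s‖) := by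
  obtain ⟨C, hC⟩ := (hsf.fderiv ℝ).exists_bound_of_continuous (hf.continuous_fderiv one_ne_zero)
  have hC0 : 0 ≤ C := le_trans (norm_nonneg _) (hC 0)
  have hv : ∀ (p : ℝ × ℝ) (v : ℝ × ℝ), ‖v‖ ≤ 1 → ‖fderiv ℝ f p v‖ ≤ C := by
    intro p v hv
    calc ‖fderiv ℝ f p v‖ ≤ ‖fderiv ℝ f p‖ * ‖v‖ := (fderiv ℝ f p).le_opNorm v
    _ ≤ C * 1 := by
        apply mul_le_mul (hC p) hv (norm_nonneg _) hC0
    _ = C := mul_one C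
  have h10 : ‖((1 : ℝ), (0 : ℝ))‖ ≤ 1 := by
    rw [Prod.norm_def]; norm_num
  have h01 : ‖((0 : ℝ), (1 : ℝ))‖ ≤ 1 := by
    rw [Prod.norm_def]; norm_num
  refine ⟨C, hC0, fun p => hv p _ h10, fun p => hv p _ h01, ?_⟩
  intro x z s
  have := Convex.norm_image_sub_le_of_norm_hasDerivWithin_le
    (f := fun t => f (x, t)) (f' := fun t => py f (x, t)) (s := univ) (C := C)
    (fun t _ => (sliceY hf x t).hasDerivWithinAt)
    (fun t _ => hv _ _ h01) convex_univ (mem_univ s) (mem_univ z)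
  simpa using this

lemma hasDerivAt_gW (hf : ContDiff ℝ 1 f) (hsf : HasCompactSupport f) (y : ℝ) :
    HasDerivAt (fun s => ∫ x : ℝ, ((starRingEnd ℂ) (f (x, s)) * px f (x, s)).im)
      (∫ x : ℝ, (((starRingEnd ℂ) (py f (x, y)) * px f (x, y)).im
        - ((starRingEnd ℂ) (px f (x, y)) * py f (x, y)).im)) y := by
  obtain ⟨R, hR⟩ := exists_R hsf
  obtain ⟨C, hC0, hCx, hCy, hCm⟩ := exists_C hf hsf
  set σ : ℝ → ℝ → ℂ := fun z x => (z - y)⁻¹ • (f (x, z) - f (x, y)) with hσdef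
  set F : ℝ → ℝ → ℝ := fun z x =>
    ((starRingEnd ℂ) (σ z x) * px f (x, z)).im
      - ((starRingEnd ℂ) (px f (x, y)) * σ z x).im with hFdef
  have hσ_bound : ∀ z x, z ≠ y → ‖σ z x‖ ≤ C := by
    intro z x hz
    rw [hσdef]
    simp only [norm_smul, norm_inv, Real.norm_eq_abs]
    rw [inv_mul_le_iff₀ (by simp [sub_eq_zero, hz] : (0:ℝ) < |z - y|)]
    calc ‖f (x, z) - f (x, y)‖ ≤ C * ‖z - y‖ := hCm x z y
    _ = C * |z - y| := by rw [Real.norm_eq_abs]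
    _ ≤ |z - y| * C := by rw [mul_comm]
  -- the slope rewrite
  have hslope : ∀ z, z ≠ y →
      slope (fun s => ∫ x : ℝ, ((starRingEnd ℂ) (f (x, s)) * px f (x, s)).im) y z
        = ∫ x : ℝ, F z x := by
    intro z hz
    have : slope (fun s => ∫ x : ℝ, ((starRingEnd ℂ) (f (x, s)) * px f (x, s)).im) y z
        = (z - y)⁻¹ • ((∫ x : ℝ, ((starRingEnd ℂ) (f (x, z)) * px f (x, z)).im)
          - ∫ x : ℝ, ((starRingEnd ℂ) (f (x, y)) * px f (x, y)).im) := rfl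
    rw [this, diff_W hf hsf y z, ← integral_smul]
    congr 1
    funext x
    rw [hFdef, hσdef]
    simp only [smul_eq_mul, Complex.real_smul, map_mul, Complex.conj_ofReal,
      Complex.mul_im, Complex.mul_re, Complex.ofReal_re, Complex.ofReal_im,
      Complex.sub_re, Complex.sub_im]
    ring
  rw [hasDerivAt_iff_tendsto_slope]
  have main : Tendsto (fun z => ∫ x : ℝ, F z x) (𝓝[≠] y)
      (𝓝 (∫ x : ℝ, (((starRingEnd ℂ) (py f (x, y)) * px f (x, y)).im
        - ((starRingEnd ℂ) (px f (x, y)) * py f (x, y)).im))) := by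
    apply tendsto_integral_filter_of_dominated_convergence
      (bound := Set.indicator (Icc (-R) R) (fun _ => 2 * C * C))
    · -- measurability
      filter_upwards with z
      apply Continuous.aestronglyMeasurable
      have hσc : Continuous (σ z) := by
        rw [hσdef]
        exact ((hf.continuous.comp (continuous_id.prodMk continuous_const)).sub
          (hf.continuous.comp (continuous_id.prodMk continuous_const))).const_smul ((z - y)⁻¹ : ℝ)
      have hpxc : Continuous fun x : ℝ => px f (x, z) :=
        (cont_px hf).comp (continuous_id.prodMk continuous_const)
      have hpxyc : Continuous fun x : ℝ => px f (x, y) :=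
        (cont_px hf).comp (continuous_id.prodMk continuous_const)
      exact (Complex.continuous_im.comp ((continuous_star.comp hσc).mul hpxc)).sub
        (Complex.continuous_im.comp ((continuous_star.comp hpxyc).mul hσc))
    · -- bound
      filter_upwards [self_mem_nhdsWithin] with z hz
      filter_upwards with x
      by_cases hx : x ∈ Icc (-R) R
      · rw [indicator_of_mem hx]
        have h1 : |((starRingEnd ℂ) (σ z x) * px f (x, z)).im| ≤ C * C := by
          refine le_trans (Complex.abs_im_le_norm _) ?_
          rw [norm_mul]
          apply mul_le_mul _ (by simpa using hCx (x, z)) (by positivity) hC0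
          simpa using hσ_bound z x hz
        have h2 : |((starRingEnd ℂ) (px f (x, y)) * σ z x).im| ≤ C * C := by
          refine le_trans (Complex.abs_im_le_norm _) ?_
          rw [norm_mul]
          apply mul_le_mul (by simpa using hCx (x, y)) (hσ_bound z x hz) (norm_nonneg _) hC0
        rw [hFdef, Real.norm_eq_abs]
        calc |((starRingEnd ℂ) (σ z x) * px f (x, z)).im
            - ((starRingEnd ℂ) (px f (x, y)) * σ z x).im|
            ≤ |((starRingEnd ℂ) (σ z x) * px f (x, z)).im|
              + |((starRingEnd ℂ) (px f (x, y)) * σ z x).im| := abs_sub _ _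
        _ ≤ C * C + C * C := add_le_add h1 h2
        _ = 2 * C * C := by ring
      · rw [indicator_of_notMem hx]
        have hf0 : ∀ s, f (x, s) = 0 := fun s =>
          image_eq_zero_of_notMem_tsupport (not_mem_ts hR hx s)
        have hp0 : ∀ s, px f (x, s) = 0 := fun s => px_zero (not_mem_ts hR hx s)
        rw [hFdef, hσdef]
        simp [hf0, hp0]
    · -- bound integrable
      exact (integrable_indicator_iff measurableSet_Icc).mpr
        (integrableOn_const measure_Icc_lt_top.ne)
    · -- pointwise limit
      filter_upwards with x
      have hσt : Tendsto (fun z => σ z x) (𝓝[≠] y) (𝓝 (py f (x, y))) := by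
        have := hasDerivAt_iff_tendsto_slope.mp (sliceY hf x y)
        apply this.congr
        intro z
        rfl
      have hpxt : Tendsto (fun z => px f (x, z)) (𝓝[≠] y) (𝓝 (px f (x, y))) :=
        (((cont_px hf).comp (continuous_const.prodMk continuous_id)).tendsto y).mono_left
          nhdsWithin_le_nhds
      have t1 : Tendsto (fun z => ((starRingEnd ℂ) (σ z x) * px f (x, z)).im) (𝓝[≠] y)
          (𝓝 (((starRingEnd ℂ) (py f (x, y)) * px f (x, y)).im)) :=
        (Complex.continuous_im.tendsto _).comp
          (((continuous_star.tendsto _).comp hσt).mul hpxt)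
      have t2 : Tendsto (fun z => ((starRingEnd ℂ) (px f (x, y)) * σ z x).im) (𝓝[≠] y)
          (𝓝 (((starRingEnd ℂ) (px f (x, y)) * py f (x, y)).im)) :=
        (Complex.continuous_im.tendsto _).comp (tendsto_const_nhds.mul hσt)
      exact t1.sub t2
  apply main.congr'
  filter_upwards [self_mem_nhdsWithin] with z hz
  exact (hslope z hz).symm

lemma conj_mul_helper (c a b : ℂ) (hc : (starRingEnd ℂ) c * c = 1) :
    (starRingEnd ℂ) (c * a) * (c * b) = (starRingEnd ℂ) a * b := by
  rw [map_mul]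
  calc (starRingEnd ℂ) c * (starRingEnd ℂ) a * (c * b)
      = ((starRingEnd ℂ) c * c) * ((starRingEnd ℂ) a * b) := by ring
  _ = (starRingEnd ℂ) a * b := by rw [hc, one_mul]

lemma conj_I_mul_I : (starRingEnd ℂ) Complex.I * Complex.I = 1 := by
  rw [Complex.conj_I]
  simp [Complex.I_mul_I]

lemma key_alg (a b a' b' : ℂ) :
    ‖Complex.I * a - b‖ ^ 2 + ‖-(Complex.I * a') - b'‖ ^ 2
      = ‖a‖ ^ 2 + ‖b‖ ^ 2 + ‖a'‖ ^ 2 + ‖b'‖ ^ 2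
        + (((((starRingEnd ℂ) b * a).im - (((starRingEnd ℂ) a) * b).im))
          - ((((starRingEnd ℂ) b' * a').im - (((starRingEnd ℂ) a') * b').im))) := by
  simp only [Complex.sq_norm, Complex.normSq_apply, Complex.sub_re,
    Complex.sub_im, Complex.neg_re, Complex.neg_im, Complex.mul_re, Complex.mul_im,
    Complex.I_re, Complex.I_im, Complex.conj_re, Complex.conj_im]
  ring

end S18

open Complex Real MeasureTheory in
theorem stmt18 (L : ℝ) (hL : 0 < L) (u u' : ℝ × ℝ → ℂ)
    (hu : ContDiff ℝ 1 u) (hu' : ContDiff ℝ 1 u')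
    -- decay at infinity along the strip
    (hsupp : HasCompactSupport u) (hsupp' : HasCompactSupport u')
    -- boundary conditions at y = 0 and y = L
    (hbc0 : ∀ x : ℝ, u (x, 0) - I * u' (x, 0) = 0)
    (hbcL : ∀ x : ℝ, exp (-(I * (2 * π * L))) * u (x, L) - I * u' (x, L) = 0) :
    (∫ x : ℝ, ∫ y in (0 : ℝ)..L,
        (‖I * px u (x, y) - py u (x, y)‖ ^ 2 +
          ‖-(I * px u' (x, y)) - py u' (x, y)‖ ^ 2)) =
      ∫ x : ℝ, ∫ y in (0 : ℝ)..L,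
        (‖px u (x, y)‖ ^ 2 + ‖py u (x, y)‖ ^ 2 +
          ‖px u' (x, y)‖ ^ 2 + ‖py u' (x, y)‖ ^ 2) := by
  classical
  obtain ⟨R, hRu⟩ := S18.exists_R hsupp
  obtain ⟨R', hRu'⟩ := S18.exists_R hsupp'
  set S : ℝ := max R R' with hSdef
  -- vanishing outside the slab
  have hmem : ∀ t : ℝ, t ∉ Icc (-S) S → (t ∉ Icc (-R) R ∧ t ∉ Icc (-R') R') := by
    intro t ht
    constructor <;> intro h <;> apply ht
    · exact Icc_subset_Icc (neg_le_neg (le_max_left R R')) (le_max_left R R') h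
    · exact Icc_subset_Icc (neg_le_neg (le_max_right R R')) (le_max_right R R') h
  have hvan : ∀ t : ℝ, t ∉ Icc (-S) S → ∀ s : ℝ,
      u (t, s) = 0 ∧ px u (t, s) = 0 ∧ py u (t, s) = 0 ∧
      u' (t, s) = 0 ∧ px u' (t, s) = 0 ∧ py u' (t, s) = 0 := by
    intro t ht s
    obtain ⟨h1, h2⟩ := hmem t ht
    have n1 := S18.not_mem_ts hRu h1 s
    have n2 := S18.not_mem_ts hRu' h2 s
    exact ⟨image_eq_zero_of_notMem_tsupport n1, S18.px_zero n1, S18.py_zero n1,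
      image_eq_zero_of_notMem_tsupport n2, S18.px_zero n2, S18.py_zero n2⟩
  obtain ⟨C, hC0, hCx, hCy, _⟩ := S18.exists_C hu hsupp
  obtain ⟨C', hC0', hCx', hCy', _⟩ := S18.exists_C hu' hsupp'
  -- continuity of the partial derivative maps
  have cpxu : Continuous (px u) := S18.cont_px hu
  have cpyu : Continuous (py u) := S18.cont_py hu
  have cpxu' : Continuous (px u') := S18.cont_px hu'
  have cpyu' : Continuous (py u') := S18.cont_py hu'
  -- the cross term integrand
  set c : ℝ × ℝ → ℝ := fun p =>
    (((starRingEnd ℂ) (py u p) * px u p).im - ((starRingEnd ℂ) (px u p) * py u p).im)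
      - (((starRingEnd ℂ) (py u' p) * px u' p).im - ((starRingEnd ℂ) (px u' p) * py u' p).im)
    with hcdef
  have hc_cont : Continuous c := by
    rw [hcdef]
    fun_prop
  have hc_bound : ∀ p : ℝ × ℝ, |c p| ≤ 2 * C * C + 2 * C' * C' := by
    intro p
    have b1 : ∀ w v : ℂ, ‖w‖ ≤ C → ‖v‖ ≤ C →
        |((starRingEnd ℂ) w * v).im| ≤ C * C := by
      intro w v hw hv
      refine le_trans (Complex.abs_im_le_norm _) ?_
      rw [norm_mul]
      exact mul_le_mul (by simpa using hw) (by simpa using hv) (norm_nonneg _) hC0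
    have b2 : ∀ w v : ℂ, ‖w‖ ≤ C' → ‖v‖ ≤ C' →
        |((starRingEnd ℂ) w * v).im| ≤ C' * C' := by
      intro w v hw hv
      refine le_trans (Complex.abs_im_le_norm _) ?_
      rw [norm_mul]
      exact mul_le_mul (by simpa using hw) (by simpa using hv) (norm_nonneg _) hC0'
    rw [hcdef]
    have h1 := b1 _ _ (hCy p) (hCx p)
    have h2 := b1 _ _ (hCx p) (hCy p)
    have h3 := b2 _ _ (hCy' p) (hCx' p)
    have h4 := b2 _ _ (hCx' p) (hCy' p)
    refine le_trans (abs_sub _ _) ?_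
    have e1 := le_trans (abs_sub (((starRingEnd ℂ) (py u p) * px u p).im)
      (((starRingEnd ℂ) (px u p) * py u p).im)) (add_le_add h1 h2)
    have e2 := le_trans (abs_sub (((starRingEnd ℂ) (py u' p) * px u' p).im)
      (((starRingEnd ℂ) (px u' p) * py u' p).im)) (add_le_add h3 h4)
    linarith
  have hc_zero : ∀ t : ℝ, t ∉ Icc (-S) S → ∀ s : ℝ, c (t, s) = 0 := by
    intro t ht s
    obtain ⟨_, h2, h3, _, h5, h6⟩ := hvan t ht s
    rw [hcdef]
    simp [h2, h3, h5, h6]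
  -- integrability of the cross-term slices
  have int_Qu : ∀ s : ℝ, Integrable (fun x : ℝ =>
      ((starRingEnd ℂ) (py u (x, s)) * px u (x, s)).im
        - ((starRingEnd ℂ) (px u (x, s)) * py u (x, s)).im) := by
    intro s
    refine Integrable.sub ?_ ?_
    · exact S18.integrable_im_mul (cpyu.comp (continuous_id.prodMk continuous_const))
        (cpxu.comp (continuous_id.prodMk continuous_const))
        (R := S) (fun t ht => (hvan t ht s).2.1)
    · exact S18.integrable_im_mul (cpxu.comp (continuous_id.prodMk continuous_const))
        (cpyu.comp (continuous_id.prodMk continuous_const))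
        (R := S) (fun t ht => (hvan t ht s).2.2.1)
  have int_Qu' : ∀ s : ℝ, Integrable (fun x : ℝ =>
      ((starRingEnd ℂ) (py u' (x, s)) * px u' (x, s)).im
        - ((starRingEnd ℂ) (px u' (x, s)) * py u' (x, s)).im) := by
    intro s
    refine Integrable.sub ?_ ?_
    · exact S18.integrable_im_mul (cpyu'.comp (continuous_id.prodMk continuous_const))
        (cpxu'.comp (continuous_id.prodMk continuous_const))
        (R := S) (fun t ht => (hvan t ht s).2.2.2.2.1)
    · exact S18.integrable_im_mul (cpxu'.comp (continuous_id.prodMk continuous_const))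
        (cpyu'.comp (continuous_id.prodMk continuous_const))
        (R := S) (fun t ht => (hvan t ht s).2.2.2.2.2)
  set d : ℝ → ℝ := fun s => ∫ x : ℝ, c (x, s) with hddef
  have hd_cont : Continuous d := by
    rw [hddef]
    refine continuous_of_dominated
      (bound := Set.indicator (Icc (-S) S) (fun _ => 2 * C * C + 2 * C' * C')) ?_ ?_ ?_ ?_
    · intro s
      exact (hc_cont.comp (continuous_id.prodMk continuous_const)).aestronglyMeasurable
    · intro s
      filter_upwards with x
      by_cases hx : x ∈ Icc (-S) S
      · rw [indicator_of_mem hx, Real.norm_eq_abs]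
        exact hc_bound _
      · rw [indicator_of_notMem hx, Real.norm_eq_abs, hc_zero x hx s]
        simp
    · exact (integrable_indicator_iff measurableSet_Icc).mpr
        (integrableOn_const measure_Icc_lt_top.ne)
    · filter_upwards with x
      exact hc_cont.comp (continuous_const.prodMk continuous_id)
  -- the boundary function and its derivative
  have hgd : ∀ y : ℝ, HasDerivAt (fun s =>
      (∫ x : ℝ, ((starRingEnd ℂ) (u (x, s)) * px u (x, s)).im)
        - ∫ x : ℝ, ((starRingEnd ℂ) (u' (x, s)) * px u' (x, s)).im) (d y) y := by
    intro y
    have h := (S18.hasDerivAt_gW hu hsupp y).sub (S18.hasDerivAt_gW hu' hsupp' y)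
    have hDy : d y = (∫ x : ℝ, (((starRingEnd ℂ) (py u (x, y)) * px u (x, y)).im
          - ((starRingEnd ℂ) (px u (x, y)) * py u (x, y)).im))
        - ∫ x : ℝ, (((starRingEnd ℂ) (py u' (x, y)) * px u' (x, y)).im
          - ((starRingEnd ℂ) (px u' (x, y)) * py u' (x, y)).im) := by
      rw [hddef]
      simp only [hcdef]
      exact integral_sub (int_Qu y) (int_Qu' y)
    rw [hDy]
    exact h
  -- boundary values vanish
  have hb0 : (∫ x : ℝ, ((starRingEnd ℂ) (u (x, 0)) * px u (x, 0)).im)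
      = ∫ x : ℝ, ((starRingEnd ℂ) (u' (x, 0)) * px u' (x, 0)).im := by
    congr 1
    funext x
    have e1 : u (x, 0) = Complex.I * u' (x, 0) := sub_eq_zero.mp (hbc0 x)
    have hderiv : HasDerivAt (fun t : ℝ => u (t, 0) - Complex.I * u' (t, 0))
        (px u (x, 0) - Complex.I * px u' (x, 0)) x :=
      (S18.sliceX hu x 0).sub ((S18.sliceX hu' x 0).const_mul Complex.I)
    have hzero : (fun t : ℝ => u (t, 0) - Complex.I * u' (t, 0)) = fun _ => (0 : ℂ) :=
      funext fun t => hbc0 t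
    rw [hzero] at hderiv
    have e2 : px u (x, 0) = Complex.I * px u' (x, 0) :=
      sub_eq_zero.mp (hderiv.unique (hasDerivAt_const x 0))
    rw [e1, e2, S18.conj_mul_helper _ _ _ S18.conj_I_mul_I]
  have hbL : (∫ x : ℝ, ((starRingEnd ℂ) (u (x, L)) * px u (x, L)).im)
      = ∫ x : ℝ, ((starRingEnd ℂ) (u' (x, L)) * px u' (x, L)).im := by
    set E : ℂ := Complex.exp (-(Complex.I * (2 * (π : ℂ) * (L : ℂ)))) with hEdef
    have hE : (starRingEnd ℂ) E * E = 1 := by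
      rw [hEdef, ← Complex.exp_conj, ← Complex.exp_add, ← Complex.exp_zero]
      congr 1
      simp only [map_neg, map_mul, Complex.conj_I, map_ofNat, Complex.conj_ofReal]
      ring
    congr 1
    funext x
    have e1 : E * u (x, L) = Complex.I * u' (x, L) := sub_eq_zero.mp (hbcL x)
    have hderiv : HasDerivAt (fun t : ℝ => E * u (t, L) - Complex.I * u' (t, L))
        (E * px u (x, L) - Complex.I * px u' (x, L)) x :=
      ((S18.sliceX hu x L).const_mul E).sub ((S18.sliceX hu' x L).const_mul Complex.I)
    have hzero : (fun t : ℝ => E * u (t, L) - Complex.I * u' (t, L)) = fun _ => (0 : ℂ) :=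
      funext fun t => hbcL t
    rw [hzero] at hderiv
    have e2 : E * px u (x, L) = Complex.I * px u' (x, L) :=
      sub_eq_zero.mp (hderiv.unique (hasDerivAt_const x 0))
    have h5 := congrArg₂ (fun a b : ℂ => (starRingEnd ℂ) a * b) e1 e2
    rw [S18.conj_mul_helper _ _ _ hE, S18.conj_mul_helper _ _ _ S18.conj_I_mul_I] at h5
    rw [← h5]
  -- fundamental theorem of calculus
  have hftc : ∫ s in (0 : ℝ)..L, d s = 0 := by
    rw [intervalIntegral.integral_eq_sub_of_hasDerivAt (fun t _ => hgd t)
      (hd_cont.intervalIntegrable 0 L)]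
    rw [hb0, hbL]
    ring
  -- Fubini for the cross term
  have hcs_c : HasCompactSupport c := by
    apply HasCompactSupport.intro (hsupp.union hsupp')
    intro p hp
    have h1 : p ∉ tsupport u := fun h => hp (mem_union_left _ h)
    have h2 : p ∉ tsupport u' := fun h => hp (mem_union_right _ h)
    rw [hcdef]
    simp [S18.px_zero h1, S18.py_zero h1, S18.px_zero h2, S18.py_zero h2]
  have hint_c : Integrable c (volume : Measure (ℝ × ℝ)) :=
    hc_cont.integrable_of_hasCompactSupport hcs_c
  have hswap : (∫ x : ℝ, ∫ y in (0 : ℝ)..L, c (x, y)) = ∫ s in (0 : ℝ)..L, d s := by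
    have h1 : ∀ x : ℝ, (∫ y in (0 : ℝ)..L, c (x, y))
        = ∫ y, c (x, y) ∂(volume.restrict (Ioc 0 L)) := fun x =>
      intervalIntegral.integral_of_le hL.le
    simp_rw [h1]
    rw [integral_integral_swap]
    · rw [intervalIntegral.integral_of_le hL.le]
    · have hp : (volume : Measure ℝ).prod ((volume : Measure ℝ).restrict (Ioc (0 : ℝ) L))
          = ((volume : Measure ℝ).prod volume).restrict (univ ×ˢ Ioc (0 : ℝ) L) := by
        rw [← Measure.prod_restrict, Measure.restrict_univ]
      have h2 : Integrable c ((volume : Measure ℝ).prod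
          ((volume : Measure ℝ).restrict (Ioc (0 : ℝ) L))) := by
        rw [hp]
        exact (by rw [← Measure.volume_eq_prod]; exact hint_c : Integrable c ((volume : Measure ℝ).prod volume)).restrict
      exact h2
  -- pointwise expansion and inner splitting
  have hBcont : Continuous (fun p : ℝ × ℝ => ‖px u p‖ ^ 2 + ‖py u p‖ ^ 2
      + ‖px u' p‖ ^ 2 + ‖py u' p‖ ^ 2) := by fun_prop
  have inner_split : ∀ x : ℝ,
      (∫ y in (0 : ℝ)..L, (‖I * px u (x, y) - py u (x, y)‖ ^ 2 +
          ‖-(I * px u' (x, y)) - py u' (x, y)‖ ^ 2))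
        = (∫ y in (0 : ℝ)..L, (‖px u (x, y)‖ ^ 2 + ‖py u (x, y)‖ ^ 2 +
            ‖px u' (x, y)‖ ^ 2 + ‖py u' (x, y)‖ ^ 2))
          + ∫ y in (0 : ℝ)..L, c (x, y) := by
    intro x
    have hpt : ∀ y : ℝ, ‖I * px u (x, y) - py u (x, y)‖ ^ 2 +
          ‖-(I * px u' (x, y)) - py u' (x, y)‖ ^ 2
        = (‖px u (x, y)‖ ^ 2 + ‖py u (x, y)‖ ^ 2 + ‖px u' (x, y)‖ ^ 2 + ‖py u' (x, y)‖ ^ 2)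
          + c (x, y) := by
      intro y
      rw [hcdef]
      exact S18.key_alg (px u (x, y)) (py u (x, y)) (px u' (x, y)) (py u' (x, y))
    simp_rw [hpt]
    exact intervalIntegral.integral_add
      ((hBcont.comp (continuous_const.prodMk continuous_id)).intervalIntegrable 0 L)
      ((hc_cont.comp (continuous_const.prodMk continuous_id)).intervalIntegrable 0 L)
  -- integrability of the outer integrands
  have hIB_int : Integrable (fun x : ℝ => ∫ y in (0 : ℝ)..L, (‖px u (x, y)‖ ^ 2 +
      ‖py u (x, y)‖ ^ 2 + ‖px u' (x, y)‖ ^ 2 + ‖py u' (x, y)‖ ^ 2)) := by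
    have hcont : Continuous (fun x : ℝ => ∫ y, (‖px u (x, y)‖ ^ 2 + ‖py u (x, y)‖ ^ 2
        + ‖px u' (x, y)‖ ^ 2 + ‖py u' (x, y)‖ ^ 2) ∂(volume.restrict (Ioc 0 L))) := by
      refine continuous_of_dominated (bound := fun _ => C * C + C * C + C' * C' + C' * C')
        ?_ ?_ ?_ ?_
      · intro x
        exact (hBcont.comp (continuous_const.prodMk continuous_id)).aestronglyMeasurable
      · intro x
        filter_upwards with y
        refine le_trans (le_of_eq (_root_.Real.norm_eq_abs _)) ?_
        have b1 : ‖px u (x, y)‖ ^ 2 ≤ C * C := by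
          rw [sq]
          exact mul_le_mul (hCx _) (hCx _) (norm_nonneg _) hC0
        have b2 : ‖py u (x, y)‖ ^ 2 ≤ C * C := by
          rw [sq]
          exact mul_le_mul (hCy _) (hCy _) (norm_nonneg _) hC0
        have b3 : ‖px u' (x, y)‖ ^ 2 ≤ C' * C' := by
          rw [sq]
          exact mul_le_mul (hCx' _) (hCx' _) (norm_nonneg _) hC0'
        have b4 : ‖py u' (x, y)‖ ^ 2 ≤ C' * C' := by
          rw [sq]
          exact mul_le_mul (hCy' _) (hCy' _) (norm_nonneg _) hC0'
        rw [_root_.abs_of_nonneg (by positivity : (0:ℝ) ≤ ‖px u (x, y)‖ ^ 2 + ‖py u (x, y)‖ ^ 2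
          + ‖px u' (x, y)‖ ^ 2 + ‖py u' (x, y)‖ ^ 2)]
        linarith
      · exact integrableOn_const measure_Ioc_lt_top.ne
      · filter_upwards with y
        exact hBcont.comp (continuous_id.prodMk continuous_const)
    have hcont2 : Continuous (fun x : ℝ => ∫ y in (0 : ℝ)..L, (‖px u (x, y)‖ ^ 2 +
        ‖py u (x, y)‖ ^ 2 + ‖px u' (x, y)‖ ^ 2 + ‖py u' (x, y)‖ ^ 2)) := by
      apply hcont.congr
      intro x
      rw [intervalIntegral.integral_of_le hL.le]
    refine S18.integrable_of_bounded_support hcont2 (R := S) ?_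
    intro t ht
    have : ∀ y : ℝ, (‖px u (t, y)‖ ^ 2 + ‖py u (t, y)‖ ^ 2 + ‖px u' (t, y)‖ ^ 2
        + ‖py u' (t, y)‖ ^ 2) = 0 := by
      intro y
      obtain ⟨_, h2, h3, _, h5, h6⟩ := hvan t ht y
      simp [h2, h3, h5, h6]
    rw [intervalIntegral.integral_congr (g := fun _ => (0 : ℝ)) (fun y _ => this y)]
    simp
  have hIC_int : Integrable (fun x : ℝ => ∫ y in (0 : ℝ)..L, c (x, y)) := by
    have hcont : Continuous (fun x : ℝ => ∫ y, c (x, y) ∂(volume.restrict (Ioc 0 L))) := by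
      refine continuous_of_dominated (bound := fun _ => 2 * C * C + 2 * C' * C') ?_ ?_ ?_ ?_
      · intro x
        exact (hc_cont.comp (continuous_const.prodMk continuous_id)).aestronglyMeasurable
      · intro x
        filter_upwards with y
        rw [Real.norm_eq_abs]
        exact hc_bound _
      · exact integrableOn_const measure_Ioc_lt_top.ne
      · filter_upwards with y
        exact hc_cont.comp (continuous_id.prodMk continuous_const)
    have hcont2 : Continuous (fun x : ℝ => ∫ y in (0 : ℝ)..L, c (x, y)) := by
      apply hcont.congr
      intro x
      rw [intervalIntegral.integral_of_le hL.le]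
    refine S18.integrable_of_bounded_support hcont2 (R := S) ?_
    intro t ht
    rw [intervalIntegral.integral_congr (g := fun _ => (0 : ℝ)) (fun y _ => hc_zero t ht y)]
    simp
  -- final assembly
  calc (∫ x : ℝ, ∫ y in (0 : ℝ)..L,
        (‖I * px u (x, y) - py u (x, y)‖ ^ 2 + ‖-(I * px u' (x, y)) - py u' (x, y)‖ ^ 2))
      = ∫ x : ℝ, ((∫ y in (0 : ℝ)..L, (‖px u (x, y)‖ ^ 2 + ‖py u (x, y)‖ ^ 2 +
            ‖px u' (x, y)‖ ^ 2 + ‖py u' (x, y)‖ ^ 2)) + ∫ y in (0 : ℝ)..L, c (x, y)) := by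
        congr 1
        funext x
        exact inner_split x
  _ = (∫ x : ℝ, ∫ y in (0 : ℝ)..L, (‖px u (x, y)‖ ^ 2 + ‖py u (x, y)‖ ^ 2 +
        ‖px u' (x, y)‖ ^ 2 + ‖py u' (x, y)‖ ^ 2)) + ∫ x : ℝ, ∫ y in (0 : ℝ)..L, c (x, y) :=
      integral_add hIB_int hIC_int
  _ = ∫ x : ℝ, ∫ y in (0 : ℝ)..L, (‖px u (x, y)‖ ^ 2 + ‖py u (x, y)‖ ^ 2 +
        ‖px u' (x, y)‖ ^ 2 + ‖py u' (x, y)‖ ^ 2) := by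
      rw [hswap, hftc, add_zero]
end
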